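/- In the algebra 𝒜_n (n ≥ 3), for all integers i,j with 2 ≤ i < j ≤ n−1 one has the identity x_{ij} = Σ_{k=i}^{j−1} x_{i1} · T_1^{k,k+1} · x_{1j}, where T_1^{k,k+1} = x_{k1}⁻¹ x_{k,k+1} x_{1,k+1}⁻¹; equivalently, x_{ij} = Σ_{k=i}^{j−1} x_{i1} x_{k1}⁻¹ x_{k,k+1} x_{1,k+1}⁻¹ x_{1j}. -/

import Mathlib

open scoped Classical

noncomputable section

namespace NCPolygon

/-- Cyclic successor on `Fin n` (the vertices of the `n`-gon in cyclic order). -/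
def csucc {n : ℕ} (i : Fin n) : Fin n :=
  ⟨(i.1 + 1) % n, Nat.mod_lt _ (Nat.lt_of_le_of_lt (Nat.zero_le _) i.isLt)⟩

/-- Cyclic predecessor on `Fin n`. -/
def cpred {n : ℕ} (i : Fin n) : Fin n :=
  ⟨(i.1 + (n - 1)) % n, Nat.mod_lt _ (Nat.lt_of_le_of_lt (Nat.zero_le _) i.isLt)⟩

/-- A list of elements of `Fin n` is *cyclic* if its entries are distinct and some
cyclic rotation of it is strictly increasing. -/
def IsCyclicSeq {n : ℕ} (l : List (Fin n)) : Prop :=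
  l.Nodup ∧ ∃ k : ℕ, (l.rotate k).Pairwise (· < ·)

/-- The pair `(i,k)` crosses `(j,l)` iff `(i,j,k,l)` is cyclic. -/
def Crosses {n : ℕ} (p q : Fin n × Fin n) : Prop :=
  IsCyclicSeq [p.1, q.1, p.2, q.2]

def NonCrossing {n : ℕ} (Δ : Set (Fin n × Fin n)) : Prop :=
  (∀ p ∈ Δ, p.1 ≠ p.2) ∧ ∀ p ∈ Δ, ∀ q ∈ Δ, ¬ Crosses p q

/-- A triangulation of the `n`-gon: a maximal crossing-free set of (directed) chords. -/
def IsTriangulation {n : ℕ} (Δ : Set (Fin n × Fin n)) : Prop :=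
  NonCrossing Δ ∧ ∀ Δ' : Set (Fin n × Fin n), NonCrossing Δ' → Δ ⊆ Δ' → Δ' = Δ

/-! ### The noncommutative polygon algebra `𝒜_n` -/

abbrev OffD (n : ℕ) := {p : Fin n × Fin n // p.1 ≠ p.2}

abbrev AGen (n : ℕ) := OffD n ⊕ OffD n

def xF {n : ℕ} (i j : Fin n) : FreeAlgebra ℚ (AGen n) :=
  if h : i ≠ j then FreeAlgebra.ι ℚ (Sum.inl ⟨(i, j), h⟩) else 1

def xiF {n : ℕ} (i j : Fin n) : FreeAlgebra ℚ (AGen n) :=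
  if h : i ≠ j then FreeAlgebra.ι ℚ (Sum.inr ⟨(i, j), h⟩) else 1

/-- The defining relations of `𝒜_n`: invertibility, triangle, and exchange relations. -/
inductive ARel (n : ℕ) : FreeAlgebra ℚ (AGen n) → FreeAlgebra ℚ (AGen n) → Prop
  | mul_inv {i j : Fin n} (h : i ≠ j) : ARel n (xF i j * xiF i j) 1
  | inv_mul {i j : Fin n} (h : i ≠ j) : ARel n (xiF i j * xF i j) 1
  | triangle {i j k : Fin n} (hij : i ≠ j) (hik : i ≠ k) (hjk : j ≠ k) :
      ARel n (xF i j * xiF k j * xF k i) (xF i k * xiF j k * xF j i)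
  | exchange {i j k l : Fin n} (h : IsCyclicSeq [i, j, k, l]) :
      ARel n (xF j l) (xF j k * xiF i k * xF i l + xF j i * xiF k i * xF k l)

/-- The noncommutative `n`-gon algebra `𝒜_n`. -/
abbrev NCPoly (n : ℕ) := RingQuot (ARel n)

/-- The generator `x_{ij} ∈ 𝒜_n` (junk value `1` when `i = j`). -/
def X {n : ℕ} (i j : Fin n) : NCPoly n :=
  RingQuot.mkAlgHom ℚ (ARel n) (xF i j)

/-- The generator `x_{ij}⁻¹ ∈ 𝒜_n`. -/
def Xinv {n : ℕ} (i j : Fin n) : NCPoly n :=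
  RingQuot.mkAlgHom ℚ (ARel n) (xiF i j)

/-- The noncommutative angle `T_i^{jk} = x_{ji}⁻¹ x_{jk} x_{ik}⁻¹ ∈ 𝒜_n`. -/
def Tang {n : ℕ} (i j k : Fin n) : NCPoly n := Xinv j i * X j k * Xinv i k

/-! ### Triangle groups -/

def tF {n : ℕ} (Δ : Set (Fin n × Fin n)) (i j : Fin n) : FreeGroup Δ :=
  if h : (i, j) ∈ Δ then FreeGroup.of (⟨(i, j), h⟩ : Δ) else 1

/-- The triangle relations of the triangle group `𝕋_Δ`. -/
def triRels {n : ℕ} (Δ : Set (Fin n × Fin n)) : Set (FreeGroup Δ) :=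
  { w | ∃ i j k : Fin n, i ≠ j ∧ i ≠ k ∧ j ≠ k ∧
      (i, j) ∈ Δ ∧ (j, i) ∈ Δ ∧ (i, k) ∈ Δ ∧ (k, i) ∈ Δ ∧ (j, k) ∈ Δ ∧ (k, j) ∈ Δ ∧
      w = tF Δ i j * (tF Δ k j)⁻¹ * tF Δ k i *
        (tF Δ i k * (tF Δ j k)⁻¹ * tF Δ j i)⁻¹ }

/-- The triangle group `𝕋_Δ` of a triangulation `Δ`. -/
abbrev TriGroup {n : ℕ} (Δ : Set (Fin n × Fin n)) := PresentedGroup (triRels Δ)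

/-- The generator `t_{ij} ∈ 𝕋_Δ` (junk value `1` when `(i,j) ∉ Δ`). -/
def tG {n : ℕ} (Δ : Set (Fin n × Fin n)) (i j : Fin n) : TriGroup Δ :=
  if h : (i, j) ∈ Δ then PresentedGroup.of (rels := triRels Δ) ⟨(i, j), h⟩ else 1

/-! ### The big triangle group `𝕋_n` -/

def btF {n : ℕ} (i j : Fin n) : FreeGroup (OffD n) :=
  if h : i ≠ j then FreeGroup.of (⟨(i, j), h⟩ : OffD n) else 1

def bigRels (n : ℕ) : Set (FreeGroup (OffD n)) :=
  { w | ∃ i j k : Fin n, i ≠ j ∧ i ≠ k ∧ j ≠ k ∧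
      w = btF i j * (btF k j)⁻¹ * btF k i * (btF i k * (btF j k)⁻¹ * btF j i)⁻¹ }

/-- The big triangle group `𝕋_n`. -/
abbrev BigTriGroup (n : ℕ) := PresentedGroup (bigRels n)

/-- The generator `t_{ij} ∈ 𝕋_n`. -/
def bigT {n : ℕ} (i j : Fin n) : BigTriGroup n :=
  if h : i ≠ j then PresentedGroup.of (rels := bigRels n) ⟨(i, j), h⟩ else 1

/-! ### Distinguished subalgebras and subgroups -/

/-- `𝒜_Δ`: the subalgebra of `𝒜_n` generated by all `x_{ij}` together with the
`x_{ij}⁻¹` for `(i,j) ∈ Δ`. -/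
def ADelta (n : ℕ) (Δ : Set (Fin n × Fin n)) : Subalgebra ℚ (NCPoly n) :=
  Algebra.adjoin ℚ
    ({a | ∃ i j : Fin n, i ≠ j ∧ a = X i j} ∪ {a | ∃ p ∈ Δ, a = Xinv p.1 p.2})

/-- `𝒬_n`: the subalgebra of `𝒜_n` generated by the `y_{ij}^k = x_{ki}⁻¹ x_{kj}`. -/
def Qn (n : ℕ) : Subalgebra ℚ (NCPoly n) :=
  Algebra.adjoin ℚ
    {a : NCPoly n | ∃ i j k : Fin n, i ≠ j ∧ i ≠ k ∧ j ≠ k ∧ a = Xinv k i * X k j}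

/-- `𝕌_Δ`: the subgroup of `𝕋_Δ` generated by the `u_{ij}^k = t_{ki}⁻¹ t_{kj}`. -/
def UDelta {n : ℕ} (Δ : Set (Fin n × Fin n)) : Subgroup (TriGroup Δ) :=
  Subgroup.closure
    {g | ∃ i j k : Fin n, (k, i) ∈ Δ ∧ (k, j) ∈ Δ ∧ g = (tG Δ k i)⁻¹ * tG Δ k j}


lemma X_mul_Xinv {n : ℕ} {i j : Fin n} (h : i ≠ j) : X i j * Xinv i j = 1 := by
  have := RingQuot.mkAlgHom_rel ℚ (ARel.mul_inv h)
  simpa [X, Xinv, map_mul, map_one] using this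

lemma Xinv_mul_X {n : ℕ} {i j : Fin n} (h : i ≠ j) : Xinv i j * X i j = 1 := by
  have := RingQuot.mkAlgHom_rel ℚ (ARel.inv_mul h)
  simpa [X, Xinv, map_mul, map_one] using this

lemma X_mul_Xinv_cancel {n : ℕ} {i j : Fin n} (h : i ≠ j) (y : NCPoly n) :
    X i j * (Xinv i j * y) = y := by
  rw [← mul_assoc, X_mul_Xinv h, one_mul]

lemma Xinv_mul_X_cancel {n : ℕ} {i j : Fin n} (h : i ≠ j) (y : NCPoly n) :
    Xinv i j * (X i j * y) = y := by
  rw [← mul_assoc, Xinv_mul_X h, one_mul]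

lemma X_exchange {n : ℕ} {i j k l : Fin n} (h : IsCyclicSeq [i, j, k, l]) :
    X j l = X j k * Xinv i k * X i l + X j i * Xinv k i * X k l := by
  have := RingQuot.mkAlgHom_rel ℚ (ARel.exchange h)
  simpa [X, Xinv, map_mul, map_add] using this

/-- In `𝒜_n`, for `2 ≤ i < j ≤ n-1` (here `Fin n` is the vertex set
`[n]` relabelled `0, …, n-1`, so vertex `1` is `⟨0, _⟩` and the hypotheses read
`1 ≤ i`, `i < j`, `j ≤ n-2`):
`x_{ij} = Σ_{k=i}^{j-1} x_{i1} · x_{k1}⁻¹ x_{k,k+1} x_{1,k+1}⁻¹ · x_{1j}`. -/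
theorem star_laurent_expansion (n : ℕ) (hn : 3 ≤ n) (i j : Fin n)
    (h1 : 1 ≤ (i : ℕ)) (hij : i < j) (h2 : (j : ℕ) ≤ n - 2) :
    X i j = ∑ k ∈ Finset.univ.filter (fun k : Fin n => i ≤ k ∧ k < j),
      X i ⟨0, by omega⟩ * Xinv k ⟨0, by omega⟩ * X k (csucc k) *
        Xinv ⟨0, by omega⟩ (csucc k) * X ⟨0, by omega⟩ j := by
  obtain ⟨jv, hjv⟩ := j
  revert hjv
  induction jv with
  | zero =>
    intro hjv hij h2
    exact absurd hij (by simp [Fin.lt_def])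
  | succ b ih =>
    intro hjv hij h2
    have hz : (0 : ℕ) < n := by omega
    set z : Fin n := ⟨0, hz⟩ with hzdef
    have hilt : (i : ℕ) < b + 1 := hij
    have hiz : i ≠ z := by simp [hzdef, Fin.ext_iff]; omega
    have hzj : z ≠ ⟨b + 1, hjv⟩ := by simp [hzdef, Fin.ext_iff]
    rcases Nat.lt_or_ge (i : ℕ) b with hib | hib
    · -- inductive step
      have hbn : b < n := by omega
      set j' : Fin n := ⟨b, hbn⟩ with hj'def
      set j : Fin n := ⟨b + 1, hjv⟩ with hjdef
      have hzj' : z ≠ j' := by simp [hzdef, hj'def, Fin.ext_iff]; omega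
      have hj'j : j' ≠ j := by simp [hj'def, hjdef, Fin.ext_iff]
      have hcyc : IsCyclicSeq [z, i, j', j] := by
        constructor
        · simp [hzdef, hj'def, hjdef, List.nodup_cons, Fin.ext_iff]; omega
        · refine ⟨0, ?_⟩
          simp only [List.rotate_zero, List.pairwise_cons, List.mem_cons, List.mem_singleton,
            List.not_mem_nil, List.Pairwise.nil, Fin.lt_def, forall_eq_or_imp, forall_eq,
            or_false, false_implies, and_true, imp_false, hzdef, hj'def, hjdef]
          exact ⟨by omega, by omega, by omega, fun _ => trivial⟩
      have hex := X_exchange hcyc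
      have hih := ih hbn hib (by simpa using (show b ≤ n - 2 by omega))
      have hcs : csucc j' = j := by
        simp [hj'def, hjdef, csucc, Fin.ext_iff, Nat.mod_eq_of_lt hjv]
      have hSins : (Finset.univ.filter (fun k : Fin n => i ≤ k ∧ k < j)) =
          insert j' (Finset.univ.filter (fun k : Fin n => i ≤ k ∧ k < j')) := by
        ext k
        simp only [Finset.mem_filter, Finset.mem_univ, Finset.mem_insert, true_and,
          Fin.le_def, Fin.lt_def, Fin.ext_iff, hjdef, hj'def]
        omega
      have hnm : j' ∉ Finset.univ.filter (fun k : Fin n => i ≤ k ∧ k < j') := by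
        simp only [Finset.mem_filter, Finset.mem_univ, true_and, lt_irrefl, and_false,
          not_false_eq_true]
      have e1 : X i j' * Xinv z j' * X z j =
          ∑ k ∈ Finset.univ.filter (fun k : Fin n => i ≤ k ∧ k < j'),
            X i z * Xinv k z * X k (csucc k) * Xinv z (csucc k) * X z j := by
        rw [hih, Finset.sum_mul, Finset.sum_mul]
        refine Finset.sum_congr rfl fun k hk => ?_
        simp [mul_assoc, X_mul_Xinv_cancel hzj']
        show X i z * (Xinv k z * (X k (csucc k) * (Xinv z (csucc k) *
          (X z j' * (Xinv z j' * X z j))))) = _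
        rw [X_mul_Xinv_cancel hzj']
      have e2 : X i z * Xinv j' z * X j' j =
          X i z * Xinv j' z * X j' (csucc j') * Xinv z (csucc j') * X z j := by
        rw [hcs]
        simp [mul_assoc, Xinv_mul_X hzj]
      rw [hSins, Finset.sum_insert hnm, hex, e1, e2, add_comm]
    · -- base case : i = b
      have hieq : (i : ℕ) = b := by omega
      set j : Fin n := ⟨b + 1, hjv⟩ with hjdef
      have hS : (Finset.univ.filter (fun k : Fin n => i ≤ k ∧ k < j)) = {i} := by
        ext k
        simp only [Finset.mem_filter, Finset.mem_univ, Finset.mem_singleton, true_and,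
          Fin.le_def, Fin.lt_def, Fin.ext_iff, hjdef]
        omega
      have hcs : csucc i = j := by
        simp [hjdef, csucc, Fin.ext_iff, hieq, Nat.mod_eq_of_lt hjv]
      rw [hS, Finset.sum_singleton, hcs]
      simp [mul_assoc, X_mul_Xinv_cancel hiz, Xinv_mul_X hzj]

end NCPolygon
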